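/- Let Q be a finitely additive probability on F admitting a localizing sequence for Q. Then P is strongly absolutely continuous with respect to Q: for every ε > 0 there exists δ > 0 such that every E ∈ F with Q(E) < δ satisfies P(E) < ε. -/

import Mathlib

open MeasureTheory Filter
open scoped NNReal

/-- If `Q` is a finitely additive probability on `F = F_T` admitting a localizing
sequence for `Q`, then `P` is strongly absolutely continuous with respect to `Q`: for every
`ε > 0` there exists `δ > 0` such that every `E ∈ F` with `Q E < δ` satisfies `P E < ε`. -/
theorem strongly_absolutely_continuous_of_localizing
    {Ω : Type*} {m : MeasurableSpace Ω} (P : Measure Ω) [IsProbabilityMeasure P]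
    (ℱ : Filtration ℝ≥0 m)
    (T : Ω → ℝ≥0) (hT : IsStoppingTime ℱ (fun ω => (T ω : WithTop ℝ≥0)))
    (Q : Set Ω → ℝ)
    (hQ01 : ∀ A : Set Ω, MeasurableSet[hT.measurableSpace] A → 0 ≤ Q A ∧ Q A ≤ 1)
    (hQempty : Q ∅ = 0) (hQuniv : Q Set.univ = 1)
    (hQadd : ∀ A B : Set Ω, MeasurableSet[hT.measurableSpace] A →
      MeasurableSet[hT.measurableSpace] B → Disjoint A B → Q (A ∪ B) = Q A + Q B)
    -- a localizing sequence for Q: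
    (τ : ℕ → Ω → ℝ≥0) (hτ : ∀ n, IsStoppingTime ℱ (fun ω => (τ n ω : WithTop ℝ≥0)))
    (hτmono : ∀ n, τ n ≤ τ (n + 1))
    (hτT : Tendsto (fun n => P {ω | T ω ≤ τ n ω}) atTop (nhds 1))
    (ν : ∀ n : ℕ, @Measure Ω ((hτ n).measurableSpace))
    (hνQ : ∀ n, ∀ A : Set Ω, MeasurableSet[(hτ n).measurableSpace] A → Q A = (ν n A).toReal)
    (hνP : ∀ n, ∀ A : Set Ω, MeasurableSet[(hτ n).measurableSpace] A → (ν n A = 0 ↔ P A = 0)) :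
    ∀ ε : ℝ, 0 < ε → ∃ δ : ℝ, 0 < δ ∧
      ∀ E : Set Ω, MeasurableSet[hT.measurableSpace] E → Q E < δ → P E < ENNReal.ofReal ε := by
  intro ε hε
  set c : ENNReal := ENNReal.ofReal (ε / 2) with hc
  have hcpos : 0 < c := ENNReal.ofReal_pos.mpr (by linarith)
  have hcne : c ≠ ⊤ := ENNReal.ofReal_ne_top
  have hc1 : (1 : ENNReal) - c < 1 :=
    ENNReal.sub_lt_self ENNReal.one_ne_top one_ne_zero hcpos.ne'
  obtain ⟨n, hn⟩ := (hτT.eventually (eventually_gt_nhds hc1)).exists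
  set S := {ω | T ω ≤ τ n ω} with hS
  have hle : (hτ n).measurableSpace ≤ m := (hτ n).measurableSpace_le
  -- ν n is a probability measure
  have hνuniv : ν n Set.univ = 1 := by
    have h := hνQ n Set.univ MeasurableSet.univ
    rw [hQuniv] at h
    rcases eq_or_ne (ν n Set.univ) ⊤ with htop | htop
    · rw [htop] at h; simp at h
    · rw [← ENNReal.ofReal_toReal htop, ← h, ENNReal.ofReal_one]
  have hνfin : IsFiniteMeasure (ν n) :=
    ⟨by rw [hνuniv]; exact ENNReal.one_lt_top⟩
  set μ := P.trim hle with hμ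
  have hμfin : IsFiniteMeasure μ := isFiniteMeasure_trim hle
  have hac : μ ≪ ν n := by
    refine Measure.AbsolutelyContinuous.mk fun A hA h0 => ?_
    rw [hμ, trim_measurableSet_eq hle hA]
    exact (hνP n A hA).mp h0
  have hint : ∫⁻ x, μ.rnDeriv (ν n) x ∂(ν n) ≠ ⊤ := by
    rw [Measure.lintegral_rnDeriv hac]
    exact measure_ne_top μ _
  obtain ⟨δ', hδ'pos, hδ'⟩ :=
    exists_pos_setLIntegral_lt_of_measure_lt (μ := ν n) hint (ε := c) hcpos.ne'
  -- key: small ν-measure implies small P-measure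
  have hkey : ∀ A : Set Ω, MeasurableSet[(hτ n).measurableSpace] A → ν n A < δ' → P A < c := by
    intro A hA hνA
    have h1 : ∫⁻ x in A, μ.rnDeriv (ν n) x ∂(ν n) < c := hδ' A hνA
    rw [Measure.setLIntegral_rnDeriv' hac hA] at h1
    rwa [hμ, trim_measurableSet_eq hle hA] at h1
  -- choose δ
  have hδmin_pos : (0 : ENNReal) < min δ' 1 := lt_min hδ'pos one_pos
  have hδmin_ne : min δ' 1 ≠ ⊤ := ne_top_of_le_ne_top ENNReal.one_ne_top (min_le_right _ _)
  refine ⟨(min δ' 1).toReal, ENNReal.toReal_pos hδmin_pos.ne' hδmin_ne, ?_⟩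
  intro E hE hQE
  set A := E ∩ S with hA
  have hAmin : MeasurableSet[(hT.min (hτ n)).measurableSpace] A :=
    by have h := hT.measurableSet_inter_le (hτ n) E hE; rwa [show {ω | (T ω : WithTop ℝ≥0) ≤ τ n ω} = S by ext; simp only [hS, Set.mem_setOf_eq]; exact WithTop.coe_le_coe] at h
  rw [IsStoppingTime.measurableSet_min_iff hT (hτ n)] at hAmin
  obtain ⟨hA_T, hA_n⟩ := hAmin
  -- Q is monotone
  have hQA_le : Q A ≤ Q E := by
    have hdiff : MeasurableSet[hT.measurableSpace] (E \ A) := hE.diff hA_T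
    have hadd := hQadd A (E \ A) hA_T hdiff disjoint_sdiff_self_right
    rw [Set.union_diff_cancel Set.inter_subset_left] at hadd
    have := (hQ01 (E \ A) hdiff).1
    linarith
  -- ν n A is small
  have hνA_ne : ν n A ≠ ⊤ := measure_ne_top _ _
  have hνA_eq : ν n A = ENNReal.ofReal (Q A) := by
    rw [hνQ n A hA_n, ENNReal.ofReal_toReal hνA_ne]
  have hνA_lt : ν n A < δ' := by
    rw [hνA_eq]
    have h2 : ENNReal.ofReal (Q A) < min δ' 1 := by
      rw [ENNReal.ofReal_lt_iff_lt_toReal (hQ01 A hA_T).1 hδmin_ne]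
      exact lt_of_le_of_lt hQA_le hQE
    exact lt_of_lt_of_le h2 (min_le_left _ _)
  have hPA : P A < c := hkey A hA_n hνA_lt
  -- the complement of S has small P-measure
  have hS_T : MeasurableSet[hT.measurableSpace] S :=
    by have h := hT.measurableSet_le_stopping_time (hτ n); rwa [show {ω | (T ω : WithTop ℝ≥0) ≤ τ n ω} = S by ext; simp only [hS, Set.mem_setOf_eq]; exact WithTop.coe_le_coe] at h
  have hSm : MeasurableSet S := hT.measurableSpace_le _ hS_T
  have hScompl : P Sᶜ < c := by
    rcases le_or_gt c 1 with hc1' | hc1'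
    · by_contra hcon
      push_neg at hcon
      have h1 : P S + P Sᶜ = 1 := by
        rw [measure_add_measure_compl hSm, measure_univ]
      have h2 : (1 - c) + c < P S + P Sᶜ :=
        lt_of_lt_of_le (ENNReal.add_lt_add_right hcne hn) (add_le_add le_rfl hcon)
      rw [tsub_add_cancel_of_le hc1', h1] at h2
      exact lt_irrefl _ h2
    · exact lt_of_le_of_lt prob_le_one hc1'
  -- conclude
  have hsub : E ⊆ A ∪ Sᶜ := by
    intro ω hω
    by_cases h : ω ∈ S
    · exact Or.inl ⟨hω, h⟩
    · exact Or.inr h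
  calc P E ≤ P (A ∪ Sᶜ) := measure_mono hsub
    _ ≤ P A + P Sᶜ := measure_union_le _ _
    _ < c + c := ENNReal.add_lt_add hPA hScompl
    _ = ENNReal.ofReal ε := by
        rw [hc, ← ENNReal.ofReal_add (by linarith) (by linarith)]
        norm_num
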